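/- Let β = log₂(3/2). Define g(x,y) = ((2x(1−x))^{1/β} + (x−y)^{1/β})^β − 2(x + y²) + (x+y)². Then g(x,y) ≥ 0 for all x, y ∈ [0,1] with x(2x−1) ≤ y ≤ x. -/
import Mathlib

noncomputable def β : ℝ := Real.logb 2 (3/2)

noncomputable def g (x y : ℝ) : ℝ :=
  ((2*x*(1-x)) ^ (1/β) + (x-y) ^ (1/β)) ^ β - 2*(x + y^2) + (x+y)^2

lemma beta_pos : 0 < β := Real.logb_pos (by norm_num) (by norm_num)

lemma beta_le_one : β ≤ 1 := by
  have : Real.logb 2 (3/2) ≤ Real.logb 2 2 :=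
    Real.logb_le_logb_of_le (by norm_num) (by norm_num) (by norm_num)
  simpa [β, Real.logb_self_eq_one] using this

lemma half_le_beta : (1/2 : ℝ) ≤ β := by
  rw [β, Real.le_logb_iff_rpow_le (by norm_num) (by norm_num)]
  have h : ((2:ℝ) ^ ((1:ℝ)/2)) ^ (2:ℕ) = 2 := by
    rw [← Real.rpow_natCast ((2:ℝ) ^ ((1:ℝ)/2)) 2, ← Real.rpow_mul (by norm_num)]
    norm_num
  nlinarith [Real.rpow_nonneg (by norm_num : (0:ℝ) ≤ 2) ((1:ℝ)/2),
    sq_nonneg ((2:ℝ) ^ ((1:ℝ)/2) - 3/2)]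

lemma q_ge_one : 1 ≤ 1/β := by
  rw [le_div_iff₀ beta_pos]; simpa using beta_le_one

lemma q_le_two : 1/β ≤ 2 := by
  rw [div_le_iff₀ beta_pos]; linarith [half_le_beta]

lemma q_ne_zero : (1:ℝ)/β ≠ 0 := one_div_ne_zero (ne_of_gt beta_pos)

lemma three_half_rpow_q : (3/2 : ℝ) ^ (1/β) = 2 := by
  have h32 : Real.log (3/2 : ℝ) ≠ 0 := by
    have := Real.log_pos (by norm_num : (1:ℝ) < 3/2); linarith
  have h2 : Real.log (2 : ℝ) ≠ 0 := by
    have := Real.log_pos (by norm_num : (1:ℝ) < 2); linarith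
  have : (1:ℝ)/β = Real.logb (3/2) 2 := by
    rw [β, Real.logb, Real.logb]; field_simp
  rw [this, Real.rpow_logb (by norm_num) (by norm_num) (by norm_num)]

/-- chord bound: for u ∈ [1,3/2], u^q ≤ 2u - 1 -/
lemma chord (u : ℝ) (hu1 : 1 ≤ u) (hu2 : u ≤ 3/2) : u ^ (1/β) ≤ 2*u - 1 := by
  have hc := convexOn_rpow (p := 1/β) q_ge_one
  have hmu : (0:ℝ) ≤ 2*(u-1) := by linarith
  have hlam : (0:ℝ) ≤ 3 - 2*u := by linarith
  have hsum : (3 - 2*u) + 2*(u-1) = 1 := by ring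
  have h := hc.2 (Set.mem_Ici.mpr (by norm_num : (0:ℝ) ≤ 1))
    (Set.mem_Ici.mpr (by norm_num : (0:ℝ) ≤ 3/2)) hlam hmu hsum
  simp only [smul_eq_mul] at h
  have hcomb : (3 - 2*u) * 1 + 2*(u-1) * (3/2) = u := by ring
  rw [hcomb] at h
  calc u ^ (1/β) ≤ (3 - 2*u) * (1:ℝ) ^ (1/β) + 2*(u-1) * (3/2:ℝ) ^ (1/β) := h
    _ = 2*u - 1 := by rw [Real.one_rpow, three_half_rpow_q]; ring

/-- key: for t ∈ [0,1], (1 + t²/2)^(1/β) ≤ 1 + t^(1/β) -/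
lemma key (t : ℝ) (ht0 : 0 ≤ t) (ht1 : t ≤ 1) :
    (1 + t^2/2) ^ (1/β) ≤ 1 + t ^ (1/β) := by
  have h1 : (1 + t^2/2) ^ (1/β) ≤ 2*(1 + t^2/2) - 1 :=
    chord _ (by nlinarith) (by nlinarith)
  have h2 : t^2 ≤ t ^ (1/β) := by
    rcases eq_or_lt_of_le ht0 with h | h
    · rw [← h, Real.zero_rpow q_ne_zero]; norm_num
    · calc t^2 = t ^ (2:ℝ) := by rw [Real.rpow_two]
        _ ≤ t ^ (1/β) := Real.rpow_le_rpow_of_exponent_ge h ht1 q_le_two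
  linarith

lemma main (A B : ℝ) (hB0 : 0 ≤ B) (hBA : B ≤ A) (hA : A ≤ 1/2) :
    A + B^2 ≤ (A ^ (1/β) + B ^ (1/β)) ^ β := by
  have hA0 : 0 ≤ A := le_trans hB0 hBA
  rcases eq_or_lt_of_le hA0 with h | hApos
  · have hB : B = 0 := le_antisymm (h ▸ hBA) hB0
    rw [← h, hB, Real.zero_rpow q_ne_zero]
    simp [Real.zero_rpow (ne_of_gt beta_pos)]
  · set t := B / A with ht
    have ht0 : 0 ≤ t := div_nonneg hB0 hA0
    have ht1 : t ≤ 1 := (div_le_one hApos).mpr hBA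
    have hBt : B = t * A := (div_mul_cancel₀ B (ne_of_gt hApos)).symm
    have hqβ : (1/β) * β = 1 := one_div_mul_cancel (ne_of_gt beta_pos)
    have key' : (1 + t^2 * A) ≤ (1 + t ^ (1/β)) ^ β := by
      have h1 : 1 + t^2 * A ≤ 1 + t^2/2 := by nlinarith [sq_nonneg t]
      have h2 : (1 + t^2/2) ≤ (1 + t ^ (1/β)) ^ β := by
        have hk := key t ht0 ht1
        have hmono := Real.rpow_le_rpow
          (Real.rpow_nonneg (by positivity) _) hk (le_of_lt beta_pos)
        rwa [← Real.rpow_mul (by positivity), hqβ, Real.rpow_one] at hmono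
      linarith
    have ht' : 0 ≤ t ^ (1/β) := Real.rpow_nonneg ht0 _
    have expand : (A ^ (1/β) + B ^ (1/β)) ^ β = A * (1 + t ^ (1/β)) ^ β := by
      have e1 : A ^ (1/β) + B ^ (1/β) = A ^ (1/β) * (1 + t ^ (1/β)) := by
        rw [hBt, Real.mul_rpow ht0 hA0]; ring
      rw [e1, Real.mul_rpow (Real.rpow_nonneg hA0 _) (by linarith),
        ← Real.rpow_mul hA0, hqβ, Real.rpow_one]
    rw [expand]
    calc A + B^2 = A * (1 + t^2 * A) := by rw [hBt]; ring
      _ ≤ A * (1 + t ^ (1/β)) ^ β :=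
        mul_le_mul_of_nonneg_left key' hA0

theorem g_nonneg (x y : ℝ) (hx : x ∈ Set.Icc (0:ℝ) 1) (hy : y ∈ Set.Icc (0:ℝ) 1)
    (h1 : x*(2*x-1) ≤ y) (h2 : y ≤ x) : 0 ≤ g x y := by
  obtain ⟨hx0, hx1⟩ := hx
  unfold g
  set A := 2*x*(1-x) with hA
  set B := x - y with hB
  have hB0 : 0 ≤ B := by rw [hB]; linarith
  have hBA : B ≤ A := by rw [hA, hB]; nlinarith
  have hAh : A ≤ 1/2 := by rw [hA]; nlinarith [sq_nonneg (2*x-1)]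
  have hm := main A B hB0 hBA hAh
  have hAB : 2*(x + y^2) - (x+y)^2 = A + B^2 := by rw [hA, hB]; ring
  linarith
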